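/- Differentiating the HJB equation ∂ₜV = −∇ξVᵀ f(ξ) − ½‖Fᵀ∇ξV‖² + (α/2)‖y(t) − Cξ‖² twice in ξ yields, for V of class C³ in ξ: ∂ₜ∇²ξξV(t,ξ) = −∇²ξξV(t,ξ) Df(ξ) − Df(ξ)ᵀ ∇²ξξV(t,ξ) − ∇²ξξV FFᵀ ∇²ξξV − D(Df(ξ)ᵀ)∇ξV(t,ξ) + αCᵀC − ∇³ξV(t,ξ)·(f(ξ) + FFᵀ∇ξV(t,ξ)). -/

import Mathlib

open Matrix

noncomputable def dotCLM {n : ℕ} (g : Fin n → ℝ) : (Fin n → ℝ) →L[ℝ] ℝ :=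
  LinearMap.toContinuousLinearMap
    { toFun := fun v => g ⬝ᵥ v
      map_add' := by intro x y; simp [dotProduct_add]
      map_smul' := by intro c x; simp [dotProduct_smul] }

noncomputable def mvCLM {n k : ℕ} (M : Matrix (Fin n) (Fin k) ℝ) :
    (Fin k → ℝ) →L[ℝ] (Fin n → ℝ) :=
  LinearMap.toContinuousLinearMap M.mulVecLin

@[simp] lemma dotCLM_apply {n : ℕ} (g v : Fin n → ℝ) : dotCLM g v = g ⬝ᵥ v := rfl
@[simp] lemma mvCLM_apply {n k : ℕ} (M : Matrix (Fin n) (Fin k) ℝ) (v : Fin k → ℝ) :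
    mvCLM M v = M *ᵥ v := rfl
noncomputable def dotL {n : ℕ} : (Fin n → ℝ) →L[ℝ] ((Fin n → ℝ) →L[ℝ] ℝ) :=
  LinearMap.toContinuousLinearMap
    { toFun := fun g => dotCLM g
      map_add' := by intro x y; ext v; simp [add_dotProduct]
      map_smul' := by intro c x; ext v; simp [smul_dotProduct] }
@[simp] lemma dotL_apply {n : ℕ} (g : Fin n → ℝ) : (dotL g : (Fin n → ℝ) →L[ℝ] ℝ) = dotCLM g := rfl

lemma proj_mvCLM {n k : ℕ} (M : Matrix (Fin k) (Fin n) ℝ) (i : Fin k) :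
    (ContinuousLinearMap.proj i : (Fin k → ℝ) →L[ℝ] ℝ).comp (mvCLM M) = dotCLM (M i) := by
  ext v; simp [Matrix.mulVec]

lemma hasFDerivAt_comp_proj {n k : ℕ} {g : (Fin n → ℝ) → (Fin k → ℝ)}
    {M : Matrix (Fin k) (Fin n) ℝ} {x : Fin n → ℝ} (h : HasFDerivAt g (mvCLM M) x) (i : Fin k) :
    HasFDerivAt (fun x => g x i) (dotCLM (M i)) x := by
  have := (ContinuousLinearMap.proj (R := ℝ) (φ := fun _ : Fin k => ℝ) i).hasFDerivAt.comp x h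
  rw [proj_mvCLM] at this; exact this

lemma hasFDerivAt_pi_rows {n k : ℕ} {g : (Fin n → ℝ) → (Fin k → ℝ)}
    {M : Matrix (Fin k) (Fin n) ℝ} {x : Fin n → ℝ}
    (h : ∀ i, HasFDerivAt (fun x => g x i) (dotCLM (M i)) x) :
    HasFDerivAt g (mvCLM M) x := by
  apply hasFDerivAt_pi''
  intro i; simpa [proj_mvCLM] using h i

lemma hess_symm {n : ℕ} {V : (Fin n → ℝ) → ℝ} {G : (Fin n → ℝ) → (Fin n → ℝ)}
    {H : (Fin n → ℝ) → Matrix (Fin n) (Fin n) ℝ}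
    (hG : ∀ x, HasFDerivAt V (dotCLM (G x)) x)
    (hH : ∀ x, HasFDerivAt G (mvCLM (H x)) x) (x : Fin n → ℝ) (i j : Fin n) :
    H x i j = H x j i := by
  have hf' : ∀ y, HasFDerivAt V ((dotL : _ →L[ℝ] _) (G y)) y := by
    intro y; simpa using hG y
  have hcomp : HasFDerivAt (fun y => (dotL : (Fin n → ℝ) →L[ℝ] _) (G y))
      ((dotL : (Fin n → ℝ) →L[ℝ] _).comp (mvCLM (H x))) x :=
    (dotL.hasFDerivAt).comp x (hH x)
  have hsym := second_derivative_symmetric hf' hcomp (Pi.single j 1) (Pi.single i 1)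
  simpa [Matrix.mulVec_single, dotProduct, Pi.single_apply, Finset.sum_ite_eq',
    mul_comm] using hsym
lemma dotCLM_inj {n : ℕ} {a b : Fin n → ℝ} (h : dotCLM a = dotCLM b) : a = b := by
  funext j
  have := congrArg (fun L : (Fin n → ℝ) →L[ℝ] ℝ => L (Pi.single j 1)) h
  simpa [dotProduct_single] using this

lemma sum3_comm {β : Type*} [AddCommMonoid β] {a b c : ℕ} (g : Fin a → Fin b → Fin c → β) :
    ∑ x, ∑ y, ∑ z, g x y z = ∑ z, ∑ y, ∑ x, g x y z := by
  calc ∑ x, ∑ y, ∑ z, g x y z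
      = ∑ x, ∑ z, ∑ y, g x y z := Finset.sum_congr rfl fun x _ => Finset.sum_comm
    _ = ∑ z, ∑ x, ∑ y, g x y z := Finset.sum_comm
    _ = ∑ z, ∑ y, ∑ x, g x y z := Finset.sum_congr rfl fun z _ => Finset.sum_comm

lemma final_algebra {n m r : ℕ} (Gv fv : Fin n → ℝ) (Hm Jm : Matrix (Fin n) (Fin n) ℝ)
    (Sv T3v : Fin n → Fin n → Fin n → ℝ)
    (F : Matrix (Fin n) (Fin m) ℝ) (C : Matrix (Fin r) (Fin n) ℝ) (α : ℝ)
    (hHs : ∀ a b, Hm a b = Hm b a) (hT : ∀ a b c, T3v a b c = T3v b c a) (i j : Fin n) :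
    -∑ x, (Gv x * Sv x i j + Jm x i * Hm x j + (fv x * T3v x i j + Hm x i * Jm x j))
    - ∑ x : Fin m, ((∑ k, F k x * Gv k) * ∑ k, F k x * T3v k i j
        + (∑ k, F k x * Hm k i) * ∑ k, F k x * Hm k j)
    + α * ∑ x : Fin r, C x i * C x j
    = -(∑ k, Hm i k * Jm k j) - (∑ k, Jm k i * Hm k j)
      - (∑ k, (∑ c, Hm i c * (∑ a, F c a * F k a)) * Hm k j)
      - (∑ k, Sv k i j * Gv k)
      + α * (∑ l, C l i * C l j)
      - (∑ k, T3v i j k * (fv k + ∑ c, (∑ a, F k a * F c a) * Gv c)) := by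
  have h1 : ∑ x, (Gv x * Sv x i j + Jm x i * Hm x j + (fv x * T3v x i j + Hm x i * Jm x j))
      = (∑ k, Sv k i j * Gv k) + (∑ k, Jm k i * Hm k j)
        + ((∑ k, T3v i j k * fv k) + (∑ k, Hm i k * Jm k j)) := by
    rw [Finset.sum_congr rfl (fun x _ => show Gv x * Sv x i j + Jm x i * Hm x j
        + (fv x * T3v x i j + Hm x i * Jm x j)
        = Sv x i j * Gv x + Jm x i * Hm x j + (T3v i j x * fv x + Hm i x * Jm x j) from by
      rw [hT x i j, hHs x i]; ring)]
    simp [Finset.sum_add_distrib]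
  have h2a : ∑ x : Fin m, (∑ k, F k x * Gv k) * ∑ k, F k x * T3v k i j
      = ∑ k, T3v i j k * (∑ c, (∑ a, F k a * F c a) * Gv c) := by
    calc ∑ l : Fin m, (∑ k, F k l * Gv k) * ∑ k, F k l * T3v k i j
        = ∑ l : Fin m, ∑ c, ∑ k, (F c l * Gv c) * (F k l * T3v k i j) :=
          Finset.sum_congr rfl fun l _ => Finset.sum_mul_sum _ _ _ _
      _ = ∑ k, ∑ c, ∑ l : Fin m, (F c l * Gv c) * (F k l * T3v k i j) := sum3_comm _
      _ = ∑ k, T3v i j k * (∑ c, (∑ a, F k a * F c a) * Gv c) := by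
          refine Finset.sum_congr rfl fun k _ => ?_
          rw [Finset.mul_sum]
          refine Finset.sum_congr rfl fun c _ => ?_
          rw [Finset.sum_mul, Finset.mul_sum]
          refine Finset.sum_congr rfl fun l _ => ?_
          rw [hT k i j]; ring
  have h2b : ∑ x : Fin m, (∑ k, F k x * Hm k i) * ∑ k, F k x * Hm k j
      = ∑ k, (∑ c, Hm i c * (∑ a, F c a * F k a)) * Hm k j := by
    calc ∑ l : Fin m, (∑ k, F k l * Hm k i) * ∑ k, F k l * Hm k j
        = ∑ l : Fin m, ∑ c, ∑ k, (F c l * Hm c i) * (F k l * Hm k j) :=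
          Finset.sum_congr rfl fun l _ => Finset.sum_mul_sum _ _ _ _
      _ = ∑ k, ∑ c, ∑ l : Fin m, (F c l * Hm c i) * (F k l * Hm k j) := sum3_comm _
      _ = ∑ k, (∑ c, Hm i c * (∑ a, F c a * F k a)) * Hm k j := by
          refine Finset.sum_congr rfl fun k _ => ?_
          rw [Finset.sum_mul]
          refine Finset.sum_congr rfl fun c _ => ?_
          rw [Finset.mul_sum, Finset.sum_mul]
          refine Finset.sum_congr rfl fun l _ => ?_
          rw [hHs c i]; ring
  have h3 : ∑ k, T3v i j k * (fv k + ∑ c, (∑ a, F k a * F c a) * Gv c)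
      = (∑ k, T3v i j k * fv k) + ∑ k, T3v i j k * (∑ c, (∑ a, F k a * F c a) * Gv c) := by
    simp [mul_add, Finset.sum_add_distrib]
  rw [h1, Finset.sum_add_distrib, h2a, h2b, h3]
  ring


/- STATEMENT 4: differentiating the HJB equation
∂ₜV = −∇ξVᵀf(ξ) − ½‖Fᵀ∇ξV‖² + (α/2)‖y(t) − Cξ‖² twice in ξ yields, for V of
class C³ in ξ (gradient G, Hessian H, third derivative tensor T3, time partials
Vt, Gt, Hts, Jacobian J of f with second-derivative tensor S):
∂ₜ∇²V = −∇²V Df − Dfᵀ ∇²V − ∇²V FFᵀ ∇²V − D(Dfᵀ)∇V + αCᵀC − ∇³V·(f + FFᵀ∇V). -/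
theorem HJB_twice_differentiated
    {n m r : ℕ}
    (f : (Fin n → ℝ) → (Fin n → ℝ)) (J : (Fin n → ℝ) → Matrix (Fin n) (Fin n) ℝ)
    (S : (Fin n → ℝ) → Fin n → Fin n → (Fin n → ℝ))
    (hf : ∀ ξ, HasFDerivAt f (mvCLM (J ξ)) ξ)
    -- f is C² : the gradient of ξ ↦ (Df(ξ))_{k i} is S ξ k i
    (hS : ∀ (ξ : Fin n → ℝ) (k i : Fin n), HasFDerivAt (fun ζ => J ζ k i) (dotCLM (S ξ k i)) ξ)
    (F : Matrix (Fin n) (Fin m) ℝ) (C : Matrix (Fin r) (Fin n) ℝ)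
    (α : ℝ) (hα : 0 < α)
    (y : ℝ → Fin r → ℝ) (hy : Continuous y)
    (V : ℝ → (Fin n → ℝ) → ℝ)
    (G Gt : ℝ → (Fin n → ℝ) → (Fin n → ℝ))
    (H Hts : ℝ → (Fin n → ℝ) → Matrix (Fin n) (Fin n) ℝ)
    (T3 : ℝ → (Fin n → ℝ) → Fin n → Fin n → (Fin n → ℝ))
    (Vt : ℝ → (Fin n → ℝ) → ℝ)
    (hVt : ∀ (t : ℝ) (ξ : Fin n → ℝ), HasDerivAt (fun s => V s ξ) (Vt t ξ) t)
    (hG : ∀ (t : ℝ) (ξ : Fin n → ℝ), HasFDerivAt (V t) (dotCLM (G t ξ)) ξ)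
    (hH : ∀ (t : ℝ) (ξ : Fin n → ℝ), HasFDerivAt (fun ζ => G t ζ) (mvCLM (H t ξ)) ξ)
    -- V is C³ in ξ: the gradient of the Hessian entry H_{i j} is T3 t ξ i j
    (hT3 : ∀ (t : ℝ) (ξ : Fin n → ℝ) (i j : Fin n),
      HasFDerivAt (fun ζ => H t ζ i j) (dotCLM (T3 t ξ i j)) ξ)
    (hGt : ∀ (t : ℝ) (ξ : Fin n → ℝ), HasDerivAt (fun s => G s ξ) (Gt t ξ) t)
    (hHts : ∀ (t : ℝ) (ξ : Fin n → ℝ) (i j : Fin n),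
      HasDerivAt (fun s => H s ξ i j) (Hts t ξ i j) t)
    -- Schwarz: spatial derivatives of the time partials
    (hmix1 : ∀ (t : ℝ) (ξ : Fin n → ℝ), HasFDerivAt (fun ζ => Vt t ζ) (dotCLM (Gt t ξ)) ξ)
    (hmix2 : ∀ (t : ℝ) (ξ : Fin n → ℝ), HasFDerivAt (fun ζ => Gt t ζ) (mvCLM (Hts t ξ)) ξ)
    -- the HJB equation
    (hHJB : ∀ (t : ℝ) (ξ : Fin n → ℝ), Vt t ξ =
      -(G t ξ ⬝ᵥ f ξ)
      - (1/2) * ((Fᵀ *ᵥ G t ξ) ⬝ᵥ (Fᵀ *ᵥ G t ξ))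
      + (α/2) * ((y t - C *ᵥ ξ) ⬝ᵥ (y t - C *ᵥ ξ))) :
    ∀ (t : ℝ) (ξ : Fin n → ℝ),
      Hts t ξ =
        - H t ξ * J ξ - (J ξ)ᵀ * H t ξ
        - H t ξ * (F * Fᵀ) * H t ξ
        - Matrix.of (fun i j => ∑ k, S ξ k i j * G t ξ k)
        + α • (Cᵀ * C)
        - Matrix.of (fun i j => T3 t ξ i j ⬝ᵥ (f ξ + (F * Fᵀ) *ᵥ G t ξ)) := by
  intro t ξ
  have Hsym : ∀ (ζ : Fin n → ℝ) (a b : Fin n), H t ζ a b = H t ζ b a :=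
    fun ζ a b => hess_symm (hG t) (hH t) ζ a b
  have T3sym1 : ∀ (ζ : Fin n → ℝ) (a b : Fin n), T3 t ζ a b = T3 t ζ b a := by
    intro ζ a b
    apply dotCLM_inj
    refine (hT3 t ζ a b).unique ?_
    have heq : (fun ζ' => H t ζ' a b) = fun ζ' => H t ζ' b a :=
      funext fun ζ' => Hsym ζ' a b
    rw [heq]; exact hT3 t ζ b a
  have T3sym2 : ∀ (ζ : Fin n → ℝ) (a b c : Fin n), T3 t ζ a b c = T3 t ζ a c b := by
    intro ζ a b c
    have h := hess_symm (V := fun x => G t x a) (G := fun x => H t x a)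
      (H := fun x => Matrix.of (fun b c => T3 t x a b c))
      (fun x => hasFDerivAt_comp_proj (hH t x) a)
      (fun x => hasFDerivAt_pi_rows (fun b => hT3 t x a b)) ζ b c
    simpa using h
  -- the full T3 symmetry we need
  have T3full : ∀ (a b c : Fin n), T3 t ξ a b c = T3 t ξ b c a := by
    intro a b c
    rw [T3sym1, T3sym2]
  -- Stage A : formula for Gt
  have GtEq : ∀ (ζ : Fin n → ℝ) (i : Fin n), Gt t ζ i =
      -(∑ k, (G t ζ k * J ζ k i + f ζ k * H t ζ k i))
      - ∑ l, ((∑ k, F k l * G t ζ k) * (∑ k, F k l * H t ζ k i))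
      + α * ∑ l, C l i * ((∑ k, C l k * ζ k) - y t l) := by
    intro ζ i
    have hVtEq : (fun ζ' => Vt t ζ') = fun ζ' =>
        -(∑ k, G t ζ' k * f ζ' k)
        - (1/2) * (∑ l, (∑ k, F k l * G t ζ' k) * (∑ k, F k l * G t ζ' k))
        + (α/2) * (∑ l, (y t l - ∑ k, C l k * ζ' k) * (y t l - ∑ k, C l k * ζ' k)) := by
      funext ζ'
      rw [hHJB]
      simp [dotProduct, Matrix.mulVec, Matrix.transpose_apply]
    have h1 : HasFDerivAt (fun ζ' => ∑ k, G t ζ' k * f ζ' k)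
        (∑ k, ((G t ζ k) • dotCLM (J ζ k) + (f ζ k) • dotCLM (H t ζ k))) ζ :=
      HasFDerivAt.fun_sum (fun k _ =>
        (hasFDerivAt_comp_proj (hH t ζ) k).mul (hasFDerivAt_comp_proj (hf ζ) k))
    have hs : ∀ l, HasFDerivAt (fun ζ' => ∑ k, F k l * G t ζ' k)
        (∑ k, F k l • dotCLM (H t ζ k)) ζ := fun l =>
      HasFDerivAt.fun_sum (fun k _ => (hasFDerivAt_comp_proj (hH t ζ) k).const_mul (F k l))
    have h2 : HasFDerivAt
        (fun ζ' => ∑ l, (∑ k, F k l * G t ζ' k) * (∑ k, F k l * G t ζ' k))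
        (∑ l, ((∑ k, F k l * G t ζ k) • (∑ k, F k l • dotCLM (H t ζ k))
              + (∑ k, F k l * G t ζ k) • (∑ k, F k l • dotCLM (H t ζ k)))) ζ :=
      HasFDerivAt.fun_sum (fun l _ => (hs l).mul (hs l))
    set P : Fin n → ((Fin n → ℝ) →L[ℝ] ℝ) := fun k => ContinuousLinearMap.proj k with hP
    have hproj : ∀ k : Fin n, HasFDerivAt (fun ζ' : Fin n → ℝ => ζ' k) (P k) ζ := fun k =>
      (ContinuousLinearMap.proj (R := ℝ) (φ := fun _ : Fin n => ℝ) k).hasFDerivAt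
    have hu : ∀ l, HasFDerivAt (fun ζ' => y t l - ∑ k, C l k * ζ' k)
        (-(∑ k, C l k • P k)) ζ := fun l =>
      HasFDerivAt.const_sub (HasFDerivAt.fun_sum (fun k _ => (hproj k).const_mul (C l k))) _
    have h3 : HasFDerivAt
        (fun ζ' => ∑ l, (y t l - ∑ k, C l k * ζ' k) * (y t l - ∑ k, C l k * ζ' k))
        (∑ l, ((y t l - ∑ k, C l k * ζ k) • (-(∑ k, C l k • P k))
              + (y t l - ∑ k, C l k * ζ k) • (-(∑ k, C l k • P k)))) ζ :=
      HasFDerivAt.fun_sum (fun l _ => (hu l).mul (hu l))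
    have hD := ((h1.fun_neg).fun_sub (h2.const_mul (1/2))).fun_add (h3.const_mul (α/2))
    rw [← hVtEq] at hD
    have huniq := (hmix1 t ζ).unique hD
    have := congrArg (fun L : (Fin n → ℝ) →L[ℝ] ℝ => L (Pi.single i 1)) huniq
    simp only [dotCLM_apply, ContinuousLinearMap.add_apply, ContinuousLinearMap.sub_apply,
      ContinuousLinearMap.neg_apply, ContinuousLinearMap.smul_apply, ContinuousLinearMap.coe_sum',
      Finset.sum_apply, ContinuousLinearMap.proj_apply, dotProduct_single,
      Pi.single_apply, smul_eq_mul, mul_one] at this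
    rw [this]
    simp only [hP, ContinuousLinearMap.proj_apply, Pi.single_apply, mul_ite, ite_mul,
      mul_one, mul_zero, zero_mul, Finset.sum_ite_eq', Finset.mem_univ, if_true]
    have e2 : ∑ x : Fin m, ((∑ k, F k x * G t ζ k) * (∑ k, F k x * H t ζ k i)
          + (∑ k, F k x * G t ζ k) * (∑ k, F k x * H t ζ k i))
        = 2 * ∑ l, (∑ k, F k l * G t ζ k) * (∑ k, F k l * H t ζ k i) := by
      rw [Finset.sum_add_distrib]; ring
    have e3 : ∑ x : Fin r, ((y t x - ∑ k, C x k * ζ k) * -C x i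
          + (y t x - ∑ k, C x k * ζ k) * -C x i)
        = 2 * ∑ l, C l i * ((∑ k, C l k * ζ k) - y t l) := by
      rw [Finset.sum_add_distrib, ← two_mul]
      rw [Finset.sum_congr rfl (fun l _ => show (y t l - ∑ k, C l k * ζ k) * -C l i
          = C l i * ((∑ k, C l k * ζ k) - y t l) from by ring)]
    rw [e2, e3]; ring
  -- Stage B : differentiate the Gt formula
  ext i j
  have hGk := fun k => hasFDerivAt_comp_proj (hH t ξ) k
  have hfk := fun k => hasFDerivAt_comp_proj (hf ξ) k
  have hB1 : HasFDerivAt (fun ζ => ∑ k, (G t ζ k * J ζ k i + f ζ k * H t ζ k i))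
      (∑ k, ((G t ξ k • dotCLM (S ξ k i) + J ξ k i • dotCLM (H t ξ k))
           + (f ξ k • dotCLM (T3 t ξ k i) + H t ξ k i • dotCLM (J ξ k)))) ξ :=
    HasFDerivAt.fun_sum fun k _ => ((hGk k).mul (hS ξ k i)).add ((hfk k).mul (hT3 t ξ k i))
  have hs : ∀ l, HasFDerivAt (fun ζ => ∑ k, F k l * G t ζ k)
      (∑ k, F k l • dotCLM (H t ξ k)) ξ := fun l =>
    HasFDerivAt.fun_sum (fun k _ => (hGk k).const_mul (F k l))
  have hp : ∀ l, HasFDerivAt (fun ζ => ∑ k, F k l * H t ζ k i)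
      (∑ k, F k l • dotCLM (T3 t ξ k i)) ξ := fun l =>
    HasFDerivAt.fun_sum (fun k _ => (hT3 t ξ k i).const_mul (F k l))
  have hB2 : HasFDerivAt
      (fun ζ => ∑ l, (∑ k, F k l * G t ζ k) * (∑ k, F k l * H t ζ k i))
      (∑ l, ((∑ k, F k l * G t ξ k) • (∑ k, F k l • dotCLM (T3 t ξ k i))
            + (∑ k, F k l * H t ξ k i) • (∑ k, F k l • dotCLM (H t ξ k)))) ξ :=
    HasFDerivAt.fun_sum (fun l _ => (hs l).mul (hp l))
  set P : Fin n → ((Fin n → ℝ) →L[ℝ] ℝ) := fun k => ContinuousLinearMap.proj k with hP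
  have hproj : ∀ k : Fin n, HasFDerivAt (fun ζ : Fin n → ℝ => ζ k) (P k) ξ := fun k =>
    (ContinuousLinearMap.proj (R := ℝ) (φ := fun _ : Fin n => ℝ) k).hasFDerivAt
  have hB3 : HasFDerivAt (fun ζ => ∑ l, C l i * ((∑ k, C l k * ζ k) - y t l))
      (∑ l, C l i • (∑ k, C l k • P k)) ξ :=
    HasFDerivAt.fun_sum (fun l _ =>
      ((HasFDerivAt.fun_sum (fun k _ => (hproj k).const_mul (C l k))).sub_const (y t l)).const_mul
        (C l i))
  have hB := ((hB1.fun_neg).fun_sub hB2).fun_add (hB3.const_mul α)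
  have hfun : (fun ζ => Gt t ζ i) = fun ζ =>
      -(∑ k, (G t ζ k * J ζ k i + f ζ k * H t ζ k i))
      - ∑ l, ((∑ k, F k l * G t ζ k) * (∑ k, F k l * H t ζ k i))
      + α * ∑ l, C l i * ((∑ k, C l k * ζ k) - y t l) :=
    funext fun ζ => GtEq ζ i
  rw [← hfun] at hB
  have huniq := (hasFDerivAt_comp_proj (hmix2 t ξ) i).unique hB
  have hval := congrArg (fun L : (Fin n → ℝ) →L[ℝ] ℝ => L (Pi.single j 1)) huniq
  simp only [dotCLM_apply, ContinuousLinearMap.add_apply, ContinuousLinearMap.sub_apply,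
    ContinuousLinearMap.neg_apply, ContinuousLinearMap.smul_apply, ContinuousLinearMap.coe_sum',
    Finset.sum_apply, dotProduct_single, smul_eq_mul, mul_one, hP,
    ContinuousLinearMap.proj_apply, Pi.single_apply, mul_ite, ite_mul,
    mul_zero, zero_mul, Finset.sum_ite_eq', Finset.mem_univ, if_true] at hval
  rw [hval]
  have hrhs : ((- H t ξ * J ξ - (J ξ)ᵀ * H t ξ - H t ξ * (F * Fᵀ) * H t ξ
        - Matrix.of fun i j => ∑ k, S ξ k i j * G t ξ k) + α • (Cᵀ * C)
        - Matrix.of fun i j => T3 t ξ i j ⬝ᵥ (f ξ + (F * Fᵀ) *ᵥ G t ξ)) i j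
      = -(∑ k, H t ξ i k * J ξ k j) - (∑ k, J ξ k i * H t ξ k j)
        - (∑ k, (∑ c, H t ξ i c * (∑ a, F c a * F k a)) * H t ξ k j)
        - (∑ k, S ξ k i j * G t ξ k)
        + α * (∑ l, C l i * C l j)
        - (∑ k, T3 t ξ i j k * (f ξ k + ∑ c, (∑ a, F k a * F c a) * G t ξ c)) := by
    simp [Matrix.mul_apply, Matrix.sub_apply, Matrix.add_apply, Matrix.neg_apply,
      Matrix.smul_apply, Matrix.of_apply, Matrix.transpose_apply, Matrix.mulVec,
      dotProduct, Pi.add_apply, smul_eq_mul, neg_mul, Finset.sum_neg_distrib,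
      Finset.mul_sum]
  rw [hrhs]
  exact final_algebra (G t ξ) (f ξ) (H t ξ) (J ξ) (S ξ) (T3 t ξ) F C α (Hsym ξ) T3full i j
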